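/- (Value bound from metric closeness) Let d be the bisimulation metric with mixing constant c ∈ (0,1) for a Markov reward process (fixed point of F(d)(sᵢ,sⱼ) = (1-c)|r(sᵢ)-r(sⱼ)| + c·W₁(d)(P(sᵢ),P(sⱼ))), and let V be the value function with discount factor c. Then for any two states sᵢ, sⱼ with d(sᵢ,sⱼ) ≤ η, we have |V(sᵢ) - V(sⱼ)| ≤ η/(1-c). -/
import Mathlib


open Finset
noncomputable section

/-- The 1-Wasserstein distance between two distributions `μ ν` on a finite set `S`
with ground cost `d`, as the infimum over couplings of the expected cost. -/
def W1 {S : Type*} [Fintype S] (d : S → S → ℝ) (μ ν : S → ℝ) : ℝ :=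
  sInf {v : ℝ | ∃ c : S → S → ℝ, (∀ x y, 0 ≤ c x y) ∧
    (∀ x, ∑ y, c x y = μ x) ∧ (∀ y, ∑ x, c x y = ν y) ∧
    v = ∑ x, ∑ y, d x y * c x y}

/-- Value bound from metric closeness: states within `η` in the bisimulation
metric have values within `η/(1-c)`. -/
theorem value_bound_from_bisim_metric {S : Type*} [Fintype S] [Nonempty S]
    (r : S → ℝ) (P : S → S → ℝ) (c Rmax : ℝ) (hc0 : 0 < c) (hc1 : c < 1)
    (hr : ∀ s, 0 ≤ r s ∧ r s ≤ Rmax)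
    (hP : ∀ s, (∀ s', 0 ≤ P s s') ∧ ∑ s', P s s' = 1)
    (d : S → S → ℝ)
    (hfix : ∀ si sj, d si sj = (1 - c) * |r si - r sj| + c * W1 d (P si) (P sj))
    (V : S → ℝ) (hV : ∀ s, V s = r s + c * ∑ s', P s s' * V s')
    (η : ℝ) (si sj : S) (hη : d si sj ≤ η) :
    |V si - V sj| ≤ η / (1 - c) := by
  classical
  have hc1' : (0:ℝ) < 1 - c := by linarith
  set g : S × S → ℝ := fun p => (1 - c) * |V p.1 - V p.2| - d p.1 p.2 with hg
  obtain ⟨p, -, hp⟩ := Finset.exists_max_image (Finset.univ : Finset (S × S)) g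
    ⟨(si, sj), Finset.mem_univ _⟩
  set M := g p with hM
  have hpb : ∀ x y : S, (1 - c) * |V x - V y| - d x y ≤ M := by
    intro x y
    exact hp (x, y) (Finset.mem_univ _)
  have key : ∀ a b : S, (1 - c) * |V a - V b| ≤ d a b + c * M := by
    intro a b
    have hW : (1 - c) * |(∑ s', P a s' * V s') - ∑ s', P b s' * V s'| - M
        ≤ W1 d (P a) (P b) := by
      apply le_csInf
      · exact ⟨∑ x, ∑ y, d x y * (P a x * P b y), fun x y => P a x * P b y,
          fun x y => mul_nonneg ((hP a).1 x) ((hP b).1 y),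
          fun x => by rw [← Finset.mul_sum, (hP b).2, mul_one],
          fun y => by rw [← Finset.sum_mul, (hP a).2, one_mul], rfl⟩
      · rintro v ⟨cp, hcp0, hcpμ, hcpν, rfl⟩
        have hsum1 : ∑ x, ∑ y, cp x y = 1 := by
          simp_rw [hcpμ]; exact (hP a).2
        have h1 : ∑ s', P a s' * V s' = ∑ x, ∑ y, cp x y * V x := by
          refine Finset.sum_congr rfl fun x _ => ?_
          rw [← Finset.sum_mul, hcpμ]
        have h2 : ∑ s', P b s' * V s' = ∑ x, ∑ y, cp x y * V y := by
          rw [Finset.sum_comm]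
          refine Finset.sum_congr rfl fun y _ => ?_
          rw [← Finset.sum_mul, hcpν]
        have hΔ : (∑ s', P a s' * V s') - ∑ s', P b s' * V s'
            = ∑ x, ∑ y, cp x y * (V x - V y) := by
          rw [h1, h2, ← Finset.sum_sub_distrib]
          refine Finset.sum_congr rfl fun x _ => ?_
          rw [← Finset.sum_sub_distrib]
          refine Finset.sum_congr rfl fun y _ => ?_
          ring
        have habs : |(∑ s', P a s' * V s') - ∑ s', P b s' * V s'|
            ≤ ∑ x, ∑ y, cp x y * |V x - V y| := by
          rw [hΔ]
          refine le_trans (Finset.abs_sum_le_sum_abs _ _) ?_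
          refine Finset.sum_le_sum fun x _ => ?_
          refine le_trans (Finset.abs_sum_le_sum_abs _ _) ?_
          refine Finset.sum_le_sum fun y _ => ?_
          rw [abs_mul, abs_of_nonneg (hcp0 x y)]
        have hstep : (1 - c) * ∑ x, ∑ y, cp x y * |V x - V y|
            ≤ (∑ x, ∑ y, d x y * cp x y) + M := by
          calc (1 - c) * ∑ x, ∑ y, cp x y * |V x - V y|
              = ∑ x, ∑ y, cp x y * ((1 - c) * |V x - V y|) := by
                rw [Finset.mul_sum]
                refine Finset.sum_congr rfl fun x _ => ?_
                rw [Finset.mul_sum]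
                exact Finset.sum_congr rfl fun y _ => by ring
            _ ≤ ∑ x, ∑ y, cp x y * (d x y + M) := by
                refine Finset.sum_le_sum fun x _ => Finset.sum_le_sum fun y _ => ?_
                exact mul_le_mul_of_nonneg_left (by linarith [hpb x y]) (hcp0 x y)
            _ = (∑ x, ∑ y, d x y * cp x y) + M := by
                simp_rw [mul_add, Finset.sum_add_distrib, ← Finset.sum_mul]
                rw [hsum1, one_mul]
                congr 1
                refine Finset.sum_congr rfl fun x _ => Finset.sum_congr rfl fun y _ => ?_
                ring
        have := mul_le_mul_of_nonneg_left habs (le_of_lt hc1')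
        linarith
    have hVa := hV a
    have hVb := hV b
    have hdiff : V a - V b = (r a - r b)
        + c * ((∑ s', P a s' * V s') - ∑ s', P b s' * V s') := by
      rw [hVa, hVb]; ring
    have habs2 : |V a - V b| ≤ |r a - r b|
        + c * |(∑ s', P a s' * V s') - ∑ s', P b s' * V s'| := by
      rw [hdiff]
      refine le_trans (abs_add_le _ _) ?_
      rw [abs_mul, abs_of_pos hc0]
    have hWnn := hW
    have hfab := hfix a b
    nlinarith [abs_nonneg (V a - V b), abs_nonneg (r a - r b)]
  have hMle : M ≤ 0 := by
    have := key p.1 p.2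
    have hMdef : M = (1 - c) * |V p.1 - V p.2| - d p.1 p.2 := rfl
    nlinarith
  have hsisj := key si sj
  have : (1 - c) * |V si - V sj| ≤ η := by nlinarith
  rw [le_div_iff₀ hc1']
  linarith [this]
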